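/- arXiv:1607.06705 — 2 statements merged into one kernel-verified Lean document; each statement's English description precedes it below -/
import Mathlib

section
/- Let R be a pseudo-valuation domain. Then for all nonzero ideals J ⊆ I of R, J is a t-reduction of I if and only if J_t is a reduction of I_t. -/
open scoped nonZeroDivisors

/-- The `v`-operation (divisorial closure) on `R`-submodules of the fraction field `K`:
`I_v = (I⁻¹)⁻¹` where `I⁻¹ = (R : I) = 1 / I`. -/
noncomputable def vS (R K : Type*) [CommRing R] [Field K] [Algebra R K]
    (I : Submodule R K) : Submodule R K := 1 / (1 / I)

/-- The `t`-operation: `I_t = ⋃ J_v` where `J` ranges over nonzero finitely generated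
sub-ideals of `I`. -/
noncomputable def tS (R K : Type*) [CommRing R] [Field K] [Algebra R K]
    (I : Submodule R K) : Submodule R K :=
  ⨆ J ∈ {J : Submodule R K | J ≠ ⊥ ∧ J.FG ∧ J ≤ I}, vS R K J

/-- The image of an ideal of `R` in the fraction field `K`, as an `R`-submodule. -/
noncomputable def idealToSub (R K : Type*) [CommRing R] [Field K] [Algebra R K]
    (I : Ideal R) : Submodule R K := Submodule.map (Algebra.linearMap R K) I

/-- The `t`-closure of an ideal of `R`, computed in the fraction field `K`. -/
noncomputable def tI (R K : Type*) [CommRing R] [Field K] [Algebra R K]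
    (I : Ideal R) : Submodule R K := tS R K (idealToSub R K I)

/-- The `v`-closure of an ideal of `R`, computed in the fraction field `K`. -/
noncomputable def vI (R K : Type*) [CommRing R] [Field K] [Algebra R K]
    (I : Ideal R) : Submodule R K := vS R K (idealToSub R K I)

section Star
variable {R : Type*} [CommRing R] {Q : Type*} [Field Q] [Algebra R Q]

theorem mem_vS {A : Submodule R Q} {x : Q} :
    x ∈ vS R Q A ↔ ∀ y ∈ (1:Submodule R Q) / A, x * y ∈ (1:Submodule R Q) :=
  Submodule.mem_div_iff_forall_mul_mem

theorem sdiv_le_sdiv {A B : Submodule R Q} (h : A ≤ B) :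
    (1:Submodule R Q) / B ≤ 1 / A := by
  intro x hx
  rw [Submodule.mem_div_iff_forall_mul_mem] at hx ⊢
  exact fun a ha => hx a (h ha)

theorem le_vS (A : Submodule R Q) : A ≤ vS R Q A := by
  intro a ha
  rw [mem_vS]
  intro y hy
  rw [Submodule.mem_div_iff_forall_mul_mem] at hy
  rw [mul_comm]; exact hy a ha

theorem vS_mono {A B : Submodule R Q} (h : A ≤ B) : vS R Q A ≤ vS R Q B :=
  sdiv_le_sdiv (sdiv_le_sdiv h)

theorem div_vS (A : Submodule R Q) : (1:Submodule R Q) / vS R Q A = 1 / A := by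
  refine le_antisymm (sdiv_le_sdiv (le_vS A)) ?_
  intro x hx
  rw [Submodule.mem_div_iff_forall_mul_mem]
  intro z hz
  rw [mem_vS] at hz
  rw [mul_comm]; exact hz x hx

theorem vS_idem (A : Submodule R Q) : vS R Q (vS R Q A) = vS R Q A := by
  show (1:Submodule R Q) / (1 / vS R Q A) = vS R Q A
  rw [div_vS]; rfl

theorem vS_mul_le (A B : Submodule R Q) : vS R Q A * B ≤ vS R Q (A * B) := by
  rw [Submodule.mul_le]
  intro x hx b hb
  rw [mem_vS] at hx ⊢
  intro y hy
  have hby : b * y ∈ (1:Submodule R Q) / A := by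
    rw [Submodule.mem_div_iff_forall_mul_mem]
    intro a ha
    rw [Submodule.mem_div_iff_forall_mul_mem] at hy
    have := hy (a * b) (Submodule.mul_mem_mul ha hb)
    rw [show b * y * a = y * (a * b) by ring] at *
    exact this
  have := hx _ hby
  rw [show x * b * y = x * (b * y) by ring]
  exact this

theorem vS_mul_vS_le (A B : Submodule R Q) :
    vS R Q A * vS R Q B ≤ vS R Q (A * B) := by
  calc vS R Q A * vS R Q B ≤ vS R Q (A * vS R Q B) := vS_mul_le _ _
    _ = vS R Q (vS R Q B * A) := by rw [mul_comm]
    _ ≤ vS R Q (vS R Q (B * A)) := vS_mono (vS_mul_le _ _)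
    _ = vS R Q (A * B) := by rw [vS_idem, mul_comm]

end Star

section Star2
variable {R : Type*} [CommRing R] {Q : Type*} [Field Q] [Algebra R Q]

theorem px_mul_px (x y : Q) :
    Submodule.span R {x} * Submodule.span R {y} = Submodule.span R {x * y} := by
  rw [Submodule.span_mul_span, Set.singleton_mul_singleton]

theorem px_one : Submodule.span R {(1:Q)} = (1 : Submodule R Q) :=
  (Submodule.one_eq_span).symm

theorem px_pow (x : Q) (n : ℕ) :
    (Submodule.span R {x}) ^ n = Submodule.span R {x ^ n} := by
  induction n with
  | zero => rw [pow_zero, pow_zero, px_one]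
  | succ n ih => rw [pow_succ, pow_succ, ih, px_mul_px]

theorem mem_px_mul {x y : Q} {A : Submodule R Q} :
    y ∈ Submodule.span R {x} * A ↔ ∃ a ∈ A, x * a = y :=
  Submodule.mem_span_singleton_mul

theorem sone_div_one : (1:Submodule R Q) / 1 = 1 := by
  apply le_antisymm
  · intro x hx
    rw [Submodule.mem_div_iff_forall_mul_mem] at hx
    have := hx 1 (Submodule.one_le.mp le_rfl)
    rwa [mul_one] at this
  · intro x hx
    rw [Submodule.mem_div_iff_forall_mul_mem]
    intro y hy
    rw [Submodule.mem_one] at hx hy ⊢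
    obtain ⟨r, rfl⟩ := hx
    obtain ⟨s, rfl⟩ := hy
    exact ⟨r * s, by rw [map_mul]⟩

theorem div_px_mul {x : Q} (hx : x ≠ 0) (A : Submodule R Q) :
    (1:Submodule R Q) / (Submodule.span R {x} * A)
      = Submodule.span R {x⁻¹} * ((1:Submodule R Q) / A) := by
  ext z
  rw [Submodule.mem_div_iff_forall_mul_mem, mem_px_mul]
  constructor
  · intro h
    refine ⟨x * z, ?_, by field_simp⟩
    rw [Submodule.mem_div_iff_forall_mul_mem]
    intro a ha
    have := h (x * a) (mem_px_mul.mpr ⟨a, ha, rfl⟩)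
    rwa [show z * (x * a) = x * z * a by ring] at this
  · rintro ⟨w, hw, rfl⟩ y hy
    rw [mem_px_mul] at hy
    obtain ⟨a, ha, rfl⟩ := hy
    rw [Submodule.mem_div_iff_forall_mul_mem] at hw
    have := hw a ha
    rw [show x⁻¹ * w * (x * a) = (w * a) * (x * x⁻¹) by ring, mul_inv_cancel₀ hx, mul_one]
    exact this

theorem vS_one : vS R Q (1 : Submodule R Q) = 1 := by
  show (1:Submodule R Q) / (1 / 1) = 1
  rw [sone_div_one, sone_div_one]

theorem vS_px_mul {x : Q} (hx : x ≠ 0) (A : Submodule R Q) :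
    vS R Q (Submodule.span R {x} * A) = Submodule.span R {x} * vS R Q A := by
  show (1:Submodule R Q) / (1 / (Submodule.span R {x} * A)) = _
  rw [div_px_mul hx, div_px_mul (inv_ne_zero hx), inv_inv]
  rfl

theorem vS_px {x : Q} (hx : x ≠ 0) :
    vS R Q (Submodule.span R {x}) = Submodule.span R {x} := by
  have := vS_px_mul (R := R) hx (1 : Submodule R Q)
  rwa [mul_one, vS_one, mul_one] at this

end Star2

section StarT
variable {R : Type*} [CommRing R] {Q : Type*} [Field Q] [Algebra R Q]

theorem tS_le {A B : Submodule R Q}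
    (h : ∀ J : Submodule R Q, J ≠ ⊥ → J.FG → J ≤ A → vS R Q J ≤ B) :
    tS R Q A ≤ B := by
  refine iSup₂_le ?_
  rintro J ⟨h1, h2, h3⟩
  exact h J h1 h2 h3

theorem vS_le_tS {A J : Submodule R Q} (h1 : J ≠ ⊥) (h2 : J.FG) (h3 : J ≤ A) :
    vS R Q J ≤ tS R Q A :=
  le_iSup₂_of_le J ⟨h1, h2, h3⟩ le_rfl

theorem le_tS (A : Submodule R Q) : A ≤ tS R Q A := by
  intro x hx
  by_cases hx0 : x = 0
  · subst hx0; exact zero_mem _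
  · exact vS_le_tS (by simpa [Submodule.span_singleton_eq_bot] using hx0)
      (Submodule.fg_span_singleton x)
      ((Submodule.span_singleton_le_iff_mem x A).mpr hx)
      (le_vS _ (Submodule.mem_span_singleton_self x))

theorem tS_mono {A B : Submodule R Q} (h : A ≤ B) : tS R Q A ≤ tS R Q B :=
  tS_le fun _ h1 h2 h3 => vS_le_tS h1 h2 (h3.trans h)

theorem tS_bot : tS R Q (⊥ : Submodule R Q) = ⊥ :=
  le_bot_iff.mp (tS_le fun _ h1 _ h3 => absurd (le_bot_iff.mp h3) h1)

theorem tS_le_vS (A : Submodule R Q) : tS R Q A ≤ vS R Q A :=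
  tS_le fun _ _ _ h3 => vS_mono h3

theorem mem_tS {A : Submodule R Q} (hA : A ≠ ⊥) {x : Q} :
    x ∈ tS R Q A ↔ ∃ J : Submodule R Q, J ≠ ⊥ ∧ J.FG ∧ J ≤ A ∧ x ∈ vS R Q J := by
  have hdir : Directed (· ≤ ·)
      fun p : {J : Submodule R Q // J ≠ ⊥ ∧ J.FG ∧ J ≤ A} => vS R Q p.val := by
    rintro ⟨p, hp1, hp2, hp3⟩ ⟨q, hq1, hq2, hq3⟩
    refine ⟨⟨p ⊔ q, ?_, hp2.sup hq2, sup_le hp3 hq3⟩, vS_mono le_sup_left, vS_mono le_sup_right⟩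
    intro hbot
    exact hp1 (le_bot_iff.mp (hbot ▸ le_sup_left))
  obtain ⟨a, haA, ha0⟩ := Submodule.exists_mem_ne_zero_of_ne_bot hA
  have hne : Nonempty {J : Submodule R Q // J ≠ ⊥ ∧ J.FG ∧ J ≤ A} :=
    ⟨⟨Submodule.span R {a}, by simpa [Submodule.span_singleton_eq_bot] using ha0,
      Submodule.fg_span_singleton a, (Submodule.span_singleton_le_iff_mem a A).mpr haA⟩⟩
  have : tS R Q A = ⨆ p : {J : Submodule R Q // J ≠ ⊥ ∧ J.FG ∧ J ≤ A}, vS R Q p.val := by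
    rw [tS, iSup_subtype]
    rfl
  rw [this, Submodule.mem_iSup_of_directed _ hdir]
  constructor
  · rintro ⟨⟨J, h1, h2, h3⟩, hx⟩; exact ⟨J, h1, h2, h3, hx⟩
  · rintro ⟨J, h1, h2, h3, hx⟩; exact ⟨⟨J, h1, h2, h3⟩, hx⟩

theorem tS_idem (A : Submodule R Q) : tS R Q (tS R Q A) = tS R Q A := by
  refine le_antisymm ?_ (le_tS _)
  by_cases hA : A = ⊥
  · subst hA; rw [tS_bot]; exact le_of_eq tS_bot
  refine tS_le fun J h1 h2 h3 => ?_
  obtain ⟨a, haA, ha0⟩ := Submodule.exists_mem_ne_zero_of_ne_bot hA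
  have hsup : tS R Q A = sSup (vS R Q '' {J : Submodule R Q | J ≠ ⊥ ∧ J.FG ∧ J ≤ A}) := by
    rw [sSup_image]; rfl
  have hc := (Submodule.fg_iff_compact J).mp h2
  rw [CompleteLattice.isCompactElement_iff_le_of_directed_sSup_le] at hc
  obtain ⟨x, hxmem, hJx⟩ := hc (vS R Q '' {J : Submodule R Q | J ≠ ⊥ ∧ J.FG ∧ J ≤ A})
    (⟨_, ⟨Submodule.span R {a}, ⟨by simpa [Submodule.span_singleton_eq_bot] using ha0,
      Submodule.fg_span_singleton a, (Submodule.span_singleton_le_iff_mem a A).mpr haA⟩, rfl⟩⟩)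
    (by
      rintro x ⟨p, ⟨hp1, hp2, hp3⟩, rfl⟩ y ⟨q, ⟨hq1, hq2, hq3⟩, rfl⟩
      refine ⟨vS R Q (p ⊔ q), ⟨p ⊔ q, ⟨?_, hp2.sup hq2, sup_le hp3 hq3⟩, rfl⟩,
        vS_mono le_sup_left, vS_mono le_sup_right⟩
      intro hbot
      exact hp1 (le_bot_iff.mp (hbot ▸ le_sup_left)))
    (hsup ▸ h3)
  obtain ⟨F, hF, rfl⟩ := hxmem
  calc vS R Q J ≤ vS R Q (vS R Q F) := vS_mono hJx
    _ = vS R Q F := vS_idem F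
    _ ≤ tS R Q A := vS_le_tS hF.1 hF.2.1 hF.2.2

end StarT

section StarM
variable {R : Type*} [CommRing R] {Q : Type*} [Field Q] [Algebra R Q]

theorem mul_ne_bot {A B : Submodule R Q} (hA : A ≠ ⊥) (hB : B ≠ ⊥) : A * B ≠ ⊥ := by
  obtain ⟨a, haA, ha0⟩ := Submodule.exists_mem_ne_zero_of_ne_bot hA
  obtain ⟨b, hbB, hb0⟩ := Submodule.exists_mem_ne_zero_of_ne_bot hB
  intro h
  have : a * b ∈ A * B := Submodule.mul_mem_mul haA hbB
  rw [h, Submodule.mem_bot] at this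
  exact (mul_ne_zero ha0 hb0) this

theorem tS_mul_tS_le (A B : Submodule R Q) :
    tS R Q A * tS R Q B ≤ tS R Q (A * B) := by
  by_cases hA : A = ⊥
  · subst hA; rw [tS_bot, Submodule.bot_mul, Submodule.bot_mul]; exact bot_le
  by_cases hB : B = ⊥
  · subst hB; rw [tS_bot, Submodule.mul_bot, Submodule.mul_bot]; exact bot_le
  rw [Submodule.mul_le]
  intro x hx y hy
  rw [mem_tS hA] at hx
  rw [mem_tS hB] at hy
  obtain ⟨F, hF1, hF2, hF3, hxF⟩ := hx
  obtain ⟨G, hG1, hG2, hG3, hyG⟩ := hy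
  have hxy : x * y ∈ vS R Q (F * G) :=
    vS_mul_vS_le F G (Submodule.mul_mem_mul hxF hyG)
  exact vS_le_tS (mul_ne_bot hF1 hG1) (hF2.mul hG2)
    (mul_le_mul' hF3 hG3) hxy

theorem tS_tS_mul_tS (A B : Submodule R Q) :
    tS R Q (tS R Q A * tS R Q B) = tS R Q (A * B) := by
  refine le_antisymm ?_ (tS_mono (mul_le_mul' (le_tS A) (le_tS B)))
  have := tS_mono (tS_mul_tS_le A B)
  rwa [tS_idem] at this

theorem tS_mul_left (A B : Submodule R Q) :
    tS R Q (tS R Q A * B) = tS R Q (A * B) := by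
  rw [← tS_tS_mul_tS A B, ← tS_tS_mul_tS (tS R Q A) B, tS_idem]

theorem tS_mul_right (A B : Submodule R Q) :
    tS R Q (A * tS R Q B) = tS R Q (A * B) := by
  rw [mul_comm, tS_mul_left, mul_comm]

theorem tS_pow (A : Submodule R Q) (n : ℕ) :
    tS R Q ((tS R Q A) ^ n) = tS R Q (A ^ n) := by
  induction n with
  | zero => rw [pow_zero, pow_zero]
  | succ n ih =>
    rw [pow_succ, pow_succ, tS_mul_right, ← tS_mul_left ((tS R Q A) ^ n) A, ih, tS_mul_left]

theorem tS_mul_pow (A B : Submodule R Q) (n : ℕ) :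
    tS R Q (tS R Q A * (tS R Q B) ^ n) = tS R Q (A * B ^ n) := by
  rw [tS_mul_left, ← tS_tS_mul_tS A ((tS R Q B) ^ n), tS_pow B n, tS_tS_mul_tS]

theorem tS_px {x : Q} (hx : x ≠ 0) :
    tS R Q (Submodule.span R {x}) = Submodule.span R {x} := by
  refine le_antisymm ?_ (le_tS _)
  have := tS_le_vS (Submodule.span R {x})
  rwa [vS_px hx] at this

theorem tS_px_mul {x : Q} (hx : x ≠ 0) (A : Submodule R Q) :
    tS R Q (Submodule.span R {x} * A) = Submodule.span R {x} * tS R Q A := by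
  by_cases hA : A = ⊥
  · subst hA; rw [Submodule.mul_bot, tS_bot, Submodule.mul_bot]
  refine le_antisymm ?_ ?_
  · refine tS_le fun J h1 h2 h3 => ?_
    have hJ' : J = Submodule.span R {x} * (Submodule.span R {x⁻¹} * J) := by
      rw [← mul_assoc, px_mul_px, mul_inv_cancel₀ hx, px_one, one_mul]
    have h1' : Submodule.span R {x⁻¹} * J ≠ ⊥ :=
      mul_ne_bot (by simpa [Submodule.span_singleton_eq_bot] using inv_ne_zero hx) h1
    have h2' : (Submodule.span R {x⁻¹} * J).FG := (Submodule.fg_span_singleton _).mul h2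
    have h3' : Submodule.span R {x⁻¹} * J ≤ A := by
      have := mul_le_mul' (le_refl (Submodule.span R {x⁻¹})) h3
      rwa [← mul_assoc, px_mul_px, inv_mul_cancel₀ hx, px_one, one_mul] at this
    calc vS R Q J = vS R Q (Submodule.span R {x} * (Submodule.span R {x⁻¹} * J)) := by
            rw [← hJ']
      _ = Submodule.span R {x} * vS R Q (Submodule.span R {x⁻¹} * J) := vS_px_mul hx _
      _ ≤ Submodule.span R {x} * tS R Q A :=
            mul_le_mul' le_rfl (vS_le_tS h1' h2' h3')
  · rw [Submodule.mul_le]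
    intro a ha b hb
    rw [mem_tS hA] at hb
    obtain ⟨F, h1, h2, h3, hbF⟩ := hb
    have : a * b ∈ Submodule.span R {x} * vS R Q F := Submodule.mul_mem_mul ha hbF
    rw [← vS_px_mul hx] at this
    refine vS_le_tS ?_ ((Submodule.fg_span_singleton x).mul h2)
      (mul_le_mul' le_rfl h3) this
    exact mul_ne_bot (by simpa [Submodule.span_singleton_eq_bot] using hx) h1

theorem tS_one : tS R Q (1 : Submodule R Q) = 1 := by
  refine le_antisymm ?_ (le_tS _)
  have := tS_le_vS (1 : Submodule R Q)
  rwa [vS_one] at this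

theorem px_cancel {z : Q} (hz : z ≠ 0) {X Y : Submodule R Q}
    (h : Submodule.span R {z} * X = Submodule.span R {z} * Y) : X = Y := by
  have := congrArg (fun W => Submodule.span R {z⁻¹} * W) h
  simpa [← mul_assoc, px_mul_px, inv_mul_cancel₀ hz, px_one, one_mul] using this

end StarM

section PVDdefs
set_option linter.unusedSectionVars false

variable {V : Type*} [CommRing V] [IsDomain V] [ValuationRing V]

/-- `q ∈ Q` belongs to (the canonical image of) `V`. -/
def inV (R : Subring V) (Q : Type*) [Field Q] [Algebra ↥R Q] (q : Q) : Prop :=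
  ∃ r s : ↥R, s ≠ 0 ∧ ((s : V) ∣ (r : V)) ∧
    q * algebraMap ↥R Q s = algebraMap ↥R Q r

/-- `q` is zero or a nonunit of (the image of) `V`. -/
def inM (R : Subring V) (Q : Type*) [Field Q] [Algebra ↥R Q] (q : Q) : Prop :=
  q = 0 ∨ (inV R Q q ∧ ¬ inV R Q q⁻¹)

variable {R : Subring V} {Q : Type*} [Field Q] [Algebra ↥R Q] [IsFractionRing ↥R Q]

theorem algR_injective : Function.Injective (algebraMap ↥R Q) :=
  IsFractionRing.injective ↥R Q

theorem algR_ne_zero {s : ↥R} (hs : s ≠ 0) : algebraMap ↥R Q s ≠ 0 := by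
  intro h
  exact hs (algR_injective (by rw [h, map_zero]))

theorem coe_ne_zero {s : ↥R} (hs : s ≠ 0) : (s : V) ≠ 0 := by
  intro h
  exact hs (Subtype.ext h)

theorem inV_algebraMap (r : ↥R) : inV R Q (algebraMap ↥R Q r) :=
  ⟨r, 1, one_ne_zero, by simp, by simp⟩

theorem inV_zero : inV R Q 0 := by simpa using inV_algebraMap (R := R) (Q := Q) 0

theorem inV_one : inV R Q 1 := by simpa using inV_algebraMap (R := R) (Q := Q) 1

theorem inV_mul {q q' : Q} (h : inV R Q q) (h' : inV R Q q') : inV R Q (q * q') := by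
  obtain ⟨r, s, hs, ⟨v, hv⟩, he⟩ := h
  obtain ⟨r', s', hs', ⟨v', hv'⟩, he'⟩ := h'
  refine ⟨r * r', s * s', mul_ne_zero hs hs', ⟨v * v', ?_⟩, ?_⟩
  · push_cast [hv, hv']; ring
  · push_cast [map_mul]
    calc q * q' * (algebraMap ↥R Q s * algebraMap ↥R Q s')
        = (q * algebraMap ↥R Q s) * (q' * algebraMap ↥R Q s') := by ring
      _ = _ := by rw [he, he']

theorem inV_add {q q' : Q} (h : inV R Q q) (h' : inV R Q q') : inV R Q (q + q') := by
  obtain ⟨r, s, hs, ⟨v, hv⟩, he⟩ := h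
  obtain ⟨r', s', hs', ⟨v', hv'⟩, he'⟩ := h'
  refine ⟨r * s' + r' * s, s * s', mul_ne_zero hs hs', ⟨v + v', ?_⟩, ?_⟩
  · push_cast [hv, hv']; ring
  · push_cast [map_mul, map_add]
    calc (q + q') * (algebraMap ↥R Q s * algebraMap ↥R Q s')
        = (q * algebraMap ↥R Q s) * algebraMap ↥R Q s'
          + (q' * algebraMap ↥R Q s') * algebraMap ↥R Q s := by ring
      _ = _ := by rw [he, he']; try ring

theorem exists_rep (q : Q) : ∃ r s : ↥R, s ≠ 0 ∧ q * algebraMap ↥R Q s = algebraMap ↥R Q r := by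
  obtain ⟨r, s, hs, he⟩ := IsFractionRing.div_surjective (A := ↥R) q
  refine ⟨r, s, nonZeroDivisors.ne_zero hs, ?_⟩
  rw [← he, div_mul_cancel₀]
  exact algR_ne_zero (nonZeroDivisors.ne_zero hs)

theorem inV_total {q : Q} (hq : q ≠ 0) : inV R Q q ∨ inV R Q q⁻¹ := by
  obtain ⟨r, s, hs, he⟩ := exists_rep (R := R) q
  have hr : r ≠ 0 := by
    intro h
    subst h
    rw [map_zero] at he
    rcases mul_eq_zero.mp he with h' | h'
    · exact hq h'
    · exact algR_ne_zero hs h'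
  rcases ValuationRing.dvd_total (s : V) (r : V) with hd | hd
  · exact Or.inl ⟨r, s, hs, hd, he⟩
  · refine Or.inr ⟨s, r, hr, hd, ?_⟩
    rw [← he]
    field_simp

end PVDdefs

section PVDmain
set_option linter.unusedSectionVars false
variable {V : Type*} [CommRing V] [IsDomain V] [ValuationRing V]
  {k : Subfield (IsLocalRing.ResidueField V)}
  {R : Subring V} {Q : Type*} [Field Q] [Algebra ↥R Q] [IsFractionRing ↥R Q]

theorem inM_mul {w a : Q} (hw : inV R Q w) (ha : inM R Q a) : inM R Q (w * a) := by
  rcases ha with ha | ⟨h1, h2⟩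
  · subst ha; rw [mul_zero]; exact Or.inl rfl
  by_cases hwa : w * a = 0
  · exact Or.inl hwa
  refine Or.inr ⟨inV_mul hw h1, fun hinv => h2 ?_⟩
  have ha0 : a ≠ 0 := fun h => hwa (by rw [h, mul_zero])
  have hw0 : w ≠ 0 := fun h => hwa (by rw [h, zero_mul])
  have : w * (w * a)⁻¹ = a⁻¹ := by field_simp; try ring
  rw [← this]
  exact inV_mul hw hinv

/-- The image of `V` as an `R`-submodule of `Q`. -/
def Vsub (R : Subring V) (Q : Type*) [Field Q] [Algebra ↥R Q] [IsFractionRing ↥R Q] : Submodule ↥R Q where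
  carrier := {q | inV R Q q}
  zero_mem' := inV_zero
  add_mem' := inV_add
  smul_mem' := fun r q hq => by
    rw [Algebra.smul_def]
    exact inV_mul (inV_algebraMap r) hq

/-- The maximal ideal of (the image of) `V` as an `R`-submodule of `Q`. -/
def Msub (R : Subring V) (Q : Type*) [Field Q] [Algebra ↥R Q] [IsFractionRing ↥R Q] :
    Submodule ↥R Q where
  carrier := {q | inM R Q q}
  zero_mem' := Or.inl rfl
  add_mem' := by
    intro a b ha hb
    rcases ha with ha | ⟨ha1, ha2⟩
    · subst ha; simpa using hb
    rcases hb with hb | ⟨hb1, hb2⟩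
    · subst hb; show inM R Q (a + 0); rw [add_zero]; exact Or.inr ⟨ha1, ha2⟩
    have ha0 : a ≠ 0 := fun h => ha2 (by rw [h, inv_zero]; exact inV_zero)
    have hb0 : b ≠ 0 := fun h => hb2 (by rw [h, inv_zero]; exact inV_zero)
    have hab : a⁻¹ * b ≠ 0 := mul_ne_zero (inv_ne_zero ha0) hb0
    rcases inV_total (R := R) hab with h | h
    · have := inM_mul (inV_add inV_one h) (Or.inr ⟨ha1, ha2⟩ : inM R Q a)
      have heq : (1 + a⁻¹ * b) * a = a + b := by field_simp; try ring
      rwa [heq] at this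
    · rw [mul_inv, inv_inv] at h
      have := inM_mul (inV_add inV_one (by rwa [mul_comm] at h)) (Or.inr ⟨hb1, hb2⟩ : inM R Q b)
      have heq : (1 + b⁻¹ * a) * b = a + b := by field_simp; try ring
      rwa [heq] at this
  smul_mem' := fun r q hq => by
    rw [Algebra.smul_def]
    exact inM_mul (inV_algebraMap r) hq

theorem mem_Vsub {q : Q} : q ∈ Vsub R Q ↔ inV R Q q := Iff.rfl
theorem mem_Msub {q : Q} : q ∈ Msub R Q ↔ inM R Q q := Iff.rfl

variable (hR : R = Subring.comap (IsLocalRing.residue V) k.toSubring)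
include hR

theorem mem_R_iff {v : V} : v ∈ R ↔ IsLocalRing.residue V v ∈ k := by
  rw [hR]; exact Iff.rfl

theorem nonunit_mem_R {v : V} (h : ¬ IsUnit v) : v ∈ R := by
  rw [mem_R_iff hR]
  have : IsLocalRing.residue V v = 0 := by
    rw [IsLocalRing.residue_eq_zero_iff]
    rwa [IsLocalRing.mem_maximalIdeal, mem_nonunits_iff]
  rw [this]
  exact zero_mem k

theorem inM_mem_one {q : Q} (h : inM R Q q) : q ∈ (1 : Submodule ↥R Q) := by
  rcases h with h | ⟨⟨r, s, hs, ⟨v, hv⟩, he⟩, h2⟩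
  · subst h; exact zero_mem _
  have hq : q ≠ 0 := fun h => h2 (by rw [h, inv_zero]; exact inV_zero)
  have hr : r ≠ 0 := by
    intro h
    subst h
    rw [map_zero] at he
    rcases mul_eq_zero.mp he with h' | h'
    · exact hq h'
    · exact algR_ne_zero hs h'
  have hvu : ¬ IsUnit v := by
    intro hu
    refine h2 ⟨s, r, hr, ⟨↑hu.unit⁻¹, ?_⟩, ?_⟩
    · have h1 : v * ↑hu.unit⁻¹ = 1 := by
        rw [Units.mul_inv_eq_one]; exact hu.unit_spec.symm
      rw [hv, mul_assoc, h1, mul_one]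
    · rw [← he]
      field_simp
  have hvR : v ∈ R := nonunit_mem_R hR hvu
  have hrs : r = s * ⟨v, hvR⟩ := Subtype.ext hv
  have : q * algebraMap ↥R Q s = algebraMap ↥R Q (⟨v, hvR⟩ : ↥R) * algebraMap ↥R Q s := by
    rw [he, hrs, map_mul, mul_comm]
  rw [Submodule.mem_one]
  exact ⟨⟨v, hvR⟩, (mul_right_cancel₀ (algR_ne_zero hs) this).symm⟩

theorem mem_one_inv {q : Q} (h1 : q ∈ (1 : Submodule ↥R Q)) (h2 : inV R Q q⁻¹) :
    q⁻¹ ∈ (1 : Submodule ↥R Q) := by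
  by_cases hq : q = 0
  · subst hq; rw [inv_zero]; exact zero_mem _
  obtain ⟨r, hrq⟩ := Submodule.mem_one.mp h1
  obtain ⟨r₁, s₁, hs₁, ⟨v, hv⟩, he⟩ := h2
  have hsrr : s₁ = r * r₁ := by
    apply algR_injective (Q := Q)
    rw [map_mul, hrq]
    have : q * (q⁻¹ * algebraMap ↥R Q s₁) = algebraMap ↥R Q s₁ := by
      rw [← mul_assoc, mul_inv_cancel₀ hq, one_mul]
    rw [← this, he]
  have hrv : (r : V) * v = 1 := by
    have h3 : (s₁ : V) = (r : V) * ((s₁ : V) * v) := by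
      rw [← hv]
      exact_mod_cast congrArg (Subtype.val) hsrr
    have h4 : (s₁ : V) * (1 - (r : V) * v) = 0 := by ring_nf; linear_combination h3
    rcases mul_eq_zero.mp h4 with h' | h'
    · exact absurd h' (coe_ne_zero hs₁)
    · linear_combination -h'
  have hrk : IsLocalRing.residue V (r : V) ∈ k := (mem_R_iff hR).mp r.2
  have hres : IsLocalRing.residue V (r : V) * IsLocalRing.residue V v = 1 := by
    rw [← map_mul, hrv, map_one]
  have hvR : v ∈ R := by
    rw [mem_R_iff hR, eq_inv_of_mul_eq_one_right hres]
    exact k.inv_mem hrk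
  have hr₁ : r₁ = s₁ * ⟨v, hvR⟩ := Subtype.ext hv
  have : q⁻¹ * algebraMap ↥R Q s₁ = algebraMap ↥R Q (⟨v, hvR⟩ : ↥R) * algebraMap ↥R Q s₁ := by
    rw [he, hr₁, map_mul, mul_comm]
  rw [Submodule.mem_one]
  exact ⟨⟨v, hvR⟩, (mul_right_cancel₀ (algR_ne_zero hs₁) this).symm⟩

theorem Ms_le_one : Msub R Q ≤ 1 := fun _ h => inM_mem_one hR h

omit hR in
theorem one_le_Vs : (1 : Submodule ↥R Q) ≤ Vsub R Q := by
  intro x hx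
  obtain ⟨r, rfl⟩ := Submodule.mem_one.mp hx
  exact inV_algebraMap r

omit hR in
theorem one_mul_mem_one {x y : Q} (hx : x ∈ (1 : Submodule ↥R Q))
    (hy : y ∈ (1 : Submodule ↥R Q)) : x * y ∈ (1 : Submodule ↥R Q) := by
  obtain ⟨r, rfl⟩ := Submodule.mem_one.mp hx
  obtain ⟨s, rfl⟩ := Submodule.mem_one.mp hy
  exact Submodule.mem_one.mpr ⟨r * s, by rw [map_mul]⟩

variable (hu : ∃ u : Q, inV R Q u ∧ u ∉ (1 : Submodule ↥R Q))
include hu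

theorem div_Ms : (1 : Submodule ↥R Q) / Msub R Q = Vsub R Q := by
  apply le_antisymm
  · intro x hx
    rw [Submodule.mem_div_iff_forall_mul_mem] at hx
    by_cases hx0 : x = 0
    · subst hx0; exact zero_mem _
    by_cases hxV : inV R Q x
    · exact hxV
    exfalso
    have hx' : inV R Q x⁻¹ := (inV_total (R := R) hx0).resolve_left hxV
    have hxm : inM R Q x⁻¹ := Or.inr ⟨hx', by rw [inv_inv]; exact hxV⟩
    obtain ⟨u, huV, hu1⟩ := hu
    have hmem : u * x⁻¹ ∈ Msub R Q := inM_mul huV hxm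
    have := hx _ hmem
    rw [show x * (u * x⁻¹) = u by field_simp; try ring] at this
    exact hu1 this
  · intro w hw
    rw [Submodule.mem_div_iff_forall_mul_mem]
    intro m hm
    exact inM_mem_one hR (inM_mul hw hm)

theorem div_Vs : (1 : Submodule ↥R Q) / Vsub R Q = Msub R Q := by
  apply le_antisymm
  · intro x hx
    rw [Submodule.mem_div_iff_forall_mul_mem] at hx
    have hx1 : x ∈ (1 : Submodule ↥R Q) := by
      have := hx 1 inV_one
      rwa [mul_one] at this
    by_cases hx0 : x = 0
    · exact Or.inl hx0
    refine Or.inr ⟨one_le_Vs hx1, fun h => ?_⟩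
    have hxi1 : x⁻¹ ∈ (1 : Submodule ↥R Q) := mem_one_inv hR hx1 h
    obtain ⟨u, huV, hu1⟩ := hu
    have hxu : x * u ∈ (1 : Submodule ↥R Q) := hx u huV
    have heq : u = x⁻¹ * (x * u) := by field_simp
    exact hu1 (by rw [heq]; exact one_mul_mem_one hxi1 hxu)
  · intro m hm
    rw [Submodule.mem_div_iff_forall_mul_mem]
    intro w hw
    rw [mul_comm]
    exact inM_mem_one hR (inM_mul hw hm)

theorem vS_Vs : vS ↥R Q (Vsub R Q) = Vsub R Q := by
  show (1 : Submodule ↥R Q) / (1 / Vsub R Q) = Vsub R Q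
  rw [div_Vs hR hu, div_Ms hR hu]

theorem vS_le_of_stable {A : Submodule ↥R Q}
    (hA : ∀ w a : Q, inV R Q w → a ∈ A → w * a ∈ A) : vS ↥R Q A ≤ A := by
  intro z hz
  by_contra hzA
  have hz0 : z ≠ 0 := fun h => hzA (h ▸ zero_mem A)
  have h1 : ∀ a ∈ A, inM R Q (z⁻¹ * a) := by
    intro a ha
    by_cases ha0 : a = 0
    · subst ha0; rw [mul_zero]; exact Or.inl rfl
    have hne : z⁻¹ * a ≠ 0 := mul_ne_zero (inv_ne_zero hz0) ha0
    have hinv : ¬ inV R Q (z⁻¹ * a)⁻¹ := by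
      intro hc
      rw [show (z⁻¹ * a)⁻¹ = z * a⁻¹ by rw [mul_inv, inv_inv]] at hc
      have := hA _ a (by rwa [mul_comm] at hc) ha
      rw [show a⁻¹ * z * a = z by field_simp; try ring] at this
      exact hzA this
    rcases inV_total (R := R) hne with h | h
    · exact Or.inr ⟨h, hinv⟩
    · exact absurd h hinv
  obtain ⟨u, huV, hu1⟩ := hu
  have hx : u * z⁻¹ ∈ (1 : Submodule ↥R Q) / A := by
    rw [Submodule.mem_div_iff_forall_mul_mem]
    intro a ha
    rw [mul_assoc]
    exact inM_mem_one hR (inM_mul huV (h1 a ha))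
  rw [mem_vS] at hz
  have := hz _ hx
  rw [show z * (u * z⁻¹) = u by field_simp; try ring] at this
  exact hu1 this

end PVDmain

section PVDdich
set_option linter.unusedSectionVars false
variable {V : Type*} [CommRing V] [IsDomain V] [ValuationRing V]
  {k : Subfield (IsLocalRing.ResidueField V)}
  {R : Subring V} {Q : Type*} [Field Q] [Algebra ↥R Q] [IsFractionRing ↥R Q]
  (hR : R = Subring.comap (IsLocalRing.residue V) k.toSubring)
  (hu : ∃ u : Q, inV R Q u ∧ u ∉ (1 : Submodule ↥R Q))
include hR hu

theorem dichotomy (A : Submodule ↥R Q) :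
    (∃ c : Q, c ≠ 0 ∧ tS ↥R Q A = Submodule.span ↥R {c}) ∨
    (∀ w a : Q, inV R Q w → a ∈ tS ↥R Q A → w * a ∈ tS ↥R Q A) := by
  by_cases hP : ∃ c, c ∈ A ∧ c ≠ 0 ∧ ∀ x ∈ A, ∃ w, inV R Q w ∧ x = c * w
  · obtain ⟨c, hcA, hc0, hcb⟩ := hP
    by_cases hsub : ∀ x ∈ A, c⁻¹ * x ∈ (1 : Submodule ↥R Q)
    · left
      refine ⟨c, hc0, ?_⟩
      have hAc : A = Submodule.span ↥R {c} := by
        apply le_antisymm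
        · intro x hx
          obtain ⟨r, hr⟩ := Submodule.mem_one.mp (hsub x hx)
          rw [Submodule.mem_span_singleton]
          refine ⟨r, ?_⟩
          rw [Algebra.smul_def, hr]
          field_simp
        · rwa [Submodule.span_singleton_le_iff_mem]
      rw [hAc, tS_px hc0]
    · push_neg at hsub
      obtain ⟨x₀, hx₀A, hx₀⟩ := hsub
      obtain ⟨u', hu'V, hu'e⟩ := hcb x₀ hx₀A
      have hu'1 : u' ∉ (1 : Submodule ↥R Q) := by
        intro h
        apply hx₀
        rw [hu'e, show c⁻¹ * (c * u') = u' by field_simp]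
        exact h
      have hcF : c ∈ Submodule.span ↥R {c} ⊔ Submodule.span ↥R {x₀} :=
        Submodule.mem_sup_left (Submodule.mem_span_singleton_self c)
      have hx₀F : x₀ ∈ Submodule.span ↥R {c} ⊔ Submodule.span ↥R {x₀} :=
        Submodule.mem_sup_right (Submodule.mem_span_singleton_self x₀)
      have hkey : tS ↥R Q A = Submodule.span ↥R {c} * Vsub R Q := by
        apply le_antisymm
        · refine (tS_le_vS A).trans ?_
          have hAle : A ≤ Submodule.span ↥R {c} * Vsub R Q := by
            intro x hx
            obtain ⟨w, hwV, hxe⟩ := hcb x hx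
            rw [hxe]
            exact Submodule.mul_mem_mul (Submodule.mem_span_singleton_self c) hwV
          calc vS ↥R Q A ≤ vS ↥R Q (Submodule.span ↥R {c} * Vsub R Q) := vS_mono hAle
            _ = Submodule.span ↥R {c} * vS ↥R Q (Vsub R Q) := vS_px_mul hc0 _
            _ = Submodule.span ↥R {c} * Vsub R Q := by rw [vS_Vs hR hu]
        · have hF1 : Submodule.span ↥R {c} ⊔ Submodule.span ↥R {x₀} ≠ ⊥ :=
            Submodule.ne_bot_iff _ |>.mpr ⟨c, hcF, hc0⟩
          have hF2 : (Submodule.span ↥R {c} ⊔ Submodule.span ↥R {x₀}).FG :=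
            (Submodule.fg_span_singleton c).sup (Submodule.fg_span_singleton x₀)
          have hF3 : Submodule.span ↥R {c} ⊔ Submodule.span ↥R {x₀} ≤ A :=
            sup_le ((Submodule.span_singleton_le_iff_mem _ _).mpr hcA)
              ((Submodule.span_singleton_le_iff_mem _ _).mpr hx₀A)
          refine le_trans ?_ (vS_le_tS hF1 hF2 hF3)
          rw [Submodule.mul_le]
          intro p hp w hwV
          rw [mem_vS]
          intro y hy
          rw [Submodule.mem_div_iff_forall_mul_mem] at hy
          have hyc : y * c ∈ (1 : Submodule ↥R Q) := hy c hcF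
          have hyx₀ : y * x₀ ∈ (1 : Submodule ↥R Q) := hy x₀ hx₀F
          obtain ⟨r, rfl⟩ := Submodule.mem_span_singleton.mp hp
          have hcyM : inM R Q (c * y) := by
            by_cases hcy0 : c * y = 0
            · exact Or.inl hcy0
            refine Or.inr ⟨one_le_Vs (by rwa [mul_comm] at hyc), fun hinv => ?_⟩
            have hy0 : y ≠ 0 := fun h => hcy0 (by rw [h, mul_zero])
            have h1 : (c * y)⁻¹ ∈ (1 : Submodule ↥R Q) :=
              mem_one_inv hR (by rwa [mul_comm] at hyc) hinv
            have heq : u' = (c * y)⁻¹ * (y * x₀) := by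
              rw [hu'e]
              field_simp
              try ring
            exact hu'1 (by rw [heq]; exact one_mul_mem_one h1 hyx₀)
          have heq2 : (r • c * w) * y = r • (w * (c * y)) := by
            rw [Algebra.smul_def, Algebra.smul_def]
            ring
          rw [heq2]
          exact Submodule.smul_mem _ r (inM_mem_one hR (inM_mul hwV hcyM))
      right
      rw [hkey]
      intro w a hwV ha
      rw [mem_px_mul] at ha ⊢
      obtain ⟨z, hzV, rfl⟩ := ha
      exact ⟨w * z, inV_mul hwV hzV, by ring⟩
  · right
    push_neg at hP
    have hstab : ∀ w a : Q, inV R Q w → a ∈ A → w * a ∈ A := by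
      intro w a hwV haA
      by_cases ha0 : a = 0
      · subst ha0; rw [mul_zero]; exact zero_mem A
      obtain ⟨d, hdA, hd⟩ := hP a haA ha0
      have hd0 : d ≠ 0 := by
        intro h
        exact hd 0 inV_zero (by rw [h, mul_zero])
      have hdaV : ¬ inV R Q (a⁻¹ * d) := by
        intro h
        exact hd _ h (by field_simp)
      have h2 : inV R Q (d⁻¹ * a) := by
        rcases inV_total (R := R) (mul_ne_zero (inv_ne_zero hd0) ha0) with h | h
        · exact h
        · rw [mul_inv, inv_inv, mul_comm] at h
          exact absurd h hdaV
      have hM : inM R Q (d⁻¹ * a) := by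
        refine Or.inr ⟨h2, fun h => hdaV ?_⟩
        rwa [mul_inv, inv_inv, mul_comm] at h
      obtain ⟨r, hr⟩ := Submodule.mem_one.mp (inM_mem_one hR (inM_mul hwV hM))
      have heq : w * a = r • d := by
        rw [Algebra.smul_def, hr]
        field_simp
        try ring
      rw [heq]
      exact Submodule.smul_mem A r hdA
    have htA : tS ↥R Q A = A :=
      le_antisymm ((tS_le_vS A).trans (vS_le_of_stable hR hu hstab)) (le_tS A)
    intro w a hw ha
    rw [htA] at ha ⊢
    exact hstab w a hw ha

end PVDdich

section IdealToSub
variable (R : Type*) [CommRing R] (K : Type*) [Field K] [Algebra R K]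

theorem idealToSub_mul (I₁ I₂ : Ideal R) :
    idealToSub R K (I₁ * I₂) = idealToSub R K I₁ * idealToSub R K I₂ :=
  Submodule.map_mul I₁ I₂ (Algebra.ofId R K)

theorem idealToSub_one : idealToSub R K 1 = 1 := by
  rw [idealToSub, Ideal.one_eq_top, Submodule.map_top, Submodule.one_eq_range]

theorem idealToSub_pow (I : Ideal R) (n : ℕ) :
    idealToSub R K (I ^ n) = (idealToSub R K I) ^ n := by
  induction n with
  | zero => rw [pow_zero, pow_zero]; exact idealToSub_one R K
  | succ n ih => rw [pow_succ, pow_succ, idealToSub_mul, ih]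

end IdealToSub

section VRcase
set_option linter.unusedSectionVars false
variable {V : Type*} [CommRing V] [IsDomain V] [ValuationRing V]
  {R : Subring V} {Q : Type*} [Field Q] [Algebra ↥R Q] [IsFractionRing ↥R Q]

theorem px_total (hv1 : ∀ q : Q, inV R Q q → q ∈ (1 : Submodule ↥R Q)) (a b : Q) :
    Submodule.span ↥R {a} ≤ Submodule.span ↥R {b} ∨
      Submodule.span ↥R {b} ≤ Submodule.span ↥R {a} := by
  by_cases ha : a = 0
  · subst ha; rw [Submodule.span_zero_singleton]; exact Or.inl bot_le
  by_cases hb : b = 0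
  · subst hb; rw [Submodule.span_zero_singleton]; exact Or.inr bot_le
  have key : ∀ x y : Q, x ≠ 0 → y ≠ 0 → inV R Q (x * y⁻¹) →
      Submodule.span ↥R {x} ≤ Submodule.span ↥R {y} := by
    intro x y hx hy h
    obtain ⟨r, hr⟩ := Submodule.mem_one.mp (hv1 _ h)
    rw [Submodule.span_singleton_le_iff_mem, Submodule.mem_span_singleton]
    refine ⟨r, ?_⟩
    rw [Algebra.smul_def, hr]
    field_simp
  rcases inV_total (R := R) (mul_ne_zero ha (inv_ne_zero hb)) with h | h
  · exact Or.inl (key a b ha hb h)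
  · rw [mul_inv, inv_inv, mul_comm] at h
    exact Or.inr (key b a hb ha h)

theorem fg_eq_px (hv1 : ∀ q : Q, inV R Q q → q ∈ (1 : Submodule ↥R Q))
    {F : Submodule ↥R Q} (hF : F.FG) : ∃ x : Q, F = Submodule.span ↥R {x} := by
  classical
  obtain ⟨s, hs⟩ := hF
  induction s using Finset.induction_on generalizing F with
  | empty =>
    refine ⟨0, ?_⟩
    rw [Submodule.span_zero_singleton, ← hs]
    simp
  | insert a s h ih =>
    obtain ⟨x, hx⟩ := ih (F := Submodule.span ↥R ↑s) rfl
    refine ?_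
    have hFs : F = Submodule.span ↥R {a} ⊔ Submodule.span ↥R {x} := by
      rw [← hs]
      push_cast
      rw [Submodule.span_insert, hx]
    rcases px_total hv1 a x with hle | hle
    · exact ⟨x, by rw [hFs, sup_eq_right.mpr hle]⟩
    · exact ⟨a, by rw [hFs, sup_eq_left.mpr hle]⟩

theorem tS_eq_of_Vs_le_one (hv1 : ∀ q : Q, inV R Q q → q ∈ (1 : Submodule ↥R Q))
    (A : Submodule ↥R Q) : tS ↥R Q A = A := by
  refine le_antisymm (tS_le fun J h1 h2 h3 => ?_) (le_tS A)
  obtain ⟨x, rfl⟩ := fg_eq_px hv1 h2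
  have hx : x ≠ 0 := by
    intro h
    subst h
    rw [Submodule.span_zero_singleton] at h1
    exact h1 rfl
  rw [vS_px hx]
  exact h3

end VRcase

/-- Let `R` be a pseudo-valuation domain issued from `(V, M, k)`. Then for all nonzero
ideals `J ⊆ I` of `R`, `J` is a `t`-reduction of `I` iff `J_t` is a reduction of `I_t`. -/
theorem pvd_t_reduction_iff_t_closure_reduction (V : Type*) [CommRing V] [IsDomain V]
    [ValuationRing V] (k : Subfield (IsLocalRing.ResidueField V))
    (R : Subring V) (hR : R = Subring.comap (IsLocalRing.residue V) k.toSubring)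
    (Q : Type*) [Field Q] [Algebra ↥R Q] [IsFractionRing ↥R Q]
    (J I : Ideal ↥R) (hJ0 : J ≠ 0) (hI0 : I ≠ 0) (hJI : J ≤ I) :
    (∃ n : ℕ, tI ↥R Q (J * I ^ n) = tI ↥R Q (I ^ (n + 1)))
      ↔ (∃ n : ℕ, tI ↥R Q J * (tI ↥R Q I) ^ n = (tI ↥R Q I) ^ (n + 1)) := by
  classical
  by_cases hu : ∃ u : Q, inV R Q u ∧ u ∉ (1 : Submodule ↥R Q)
  · constructor
    · rintro ⟨n, hn⟩
      simp only [tI] at hn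
      rw [idealToSub_mul, idealToSub_pow, idealToSub_pow] at hn
      -- hn : tS (imJ * imI ^ n) = tS (imI ^ (n+1))
      rcases dichotomy hR hu (idealToSub ↥R Q I) with ⟨c, hc0, hcp⟩ | hstab
      · -- principal case
        have hcn : c ^ n ≠ 0 := pow_ne_zero n hc0
        have lhs : tS ↥R Q (idealToSub ↥R Q J * idealToSub ↥R Q I ^ n)
            = Submodule.span ↥R {c ^ n} * tS ↥R Q (idealToSub ↥R Q J) := by
          rw [← tS_mul_pow, hcp, px_pow,
            mul_comm (tS ↥R Q (idealToSub ↥R Q J)) (Submodule.span ↥R {c ^ n}),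
            tS_px_mul hcn, tS_idem]
        have rhs : tS ↥R Q (idealToSub ↥R Q I ^ (n + 1))
            = Submodule.span ↥R {c ^ (n + 1)} := by
          rw [← tS_pow, hcp, px_pow, tS_px (pow_ne_zero (n + 1) hc0)]
        have hJt : tS ↥R Q (idealToSub ↥R Q J) = Submodule.span ↥R {c} := by
          apply px_cancel hcn
          rw [← lhs, hn, rhs, px_mul_px, ← pow_succ]
        refine ⟨0, ?_⟩
        simp only [tI]
        rw [hJt, hcp, pow_zero, mul_one, pow_one]
      · -- stable case
        have hstep : tS ↥R Q (idealToSub ↥R Q J * idealToSub ↥R Q I ^ (n + 1))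
            = tS ↥R Q (idealToSub ↥R Q I ^ (n + 1 + 1)) := by
          rw [pow_succ, ← mul_assoc, ← tS_mul_left, hn, tS_mul_left, ← pow_succ]
        have hclosed : ∀ B : Submodule ↥R Q,
            (∀ w a : Q, inV R Q w → a ∈ B → w * a ∈ B) → tS ↥R Q B = B :=
          fun B hB => le_antisymm ((tS_le_vS B).trans (vS_le_of_stable hR hu hB)) (le_tS B)
        have hmulstab : ∀ X Y : Submodule ↥R Q,
            (∀ w a : Q, inV R Q w → a ∈ Y → w * a ∈ Y) →
            ∀ w a : Q, inV R Q w → a ∈ X * Y → w * a ∈ X * Y := by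
          intro X Y hY w a hw ha
          refine Submodule.mul_induction_on ha (fun x hx y hy => ?_) (fun p q hp hq => ?_)
          · rw [show w * (x * y) = x * (w * y) by ring]
            exact Submodule.mul_mem_mul hx (hY w y hw hy)
          · rw [mul_add]; exact add_mem hp hq
        have hpow : ∀ m : ℕ, ∀ w a : Q, inV R Q w →
            a ∈ (tS ↥R Q (idealToSub ↥R Q I)) ^ (m + 1) →
            w * a ∈ (tS ↥R Q (idealToSub ↥R Q I)) ^ (m + 1) := by
          intro m
          rw [pow_succ]
          exact hmulstab _ _ hstab
        have hXstab := hmulstab (tS ↥R Q (idealToSub ↥R Q J))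
          ((tS ↥R Q (idealToSub ↥R Q I)) ^ (n + 1)) (hpow n)
        refine ⟨n + 1, ?_⟩
        simp only [tI]
        calc tS ↥R Q (idealToSub ↥R Q J) * tS ↥R Q (idealToSub ↥R Q I) ^ (n + 1)
            = tS ↥R Q (tS ↥R Q (idealToSub ↥R Q J)
                * tS ↥R Q (idealToSub ↥R Q I) ^ (n + 1)) := (hclosed _ hXstab).symm
          _ = tS ↥R Q (idealToSub ↥R Q J * idealToSub ↥R Q I ^ (n + 1)) := tS_mul_pow _ _ _
          _ = tS ↥R Q (idealToSub ↥R Q I ^ (n + 1 + 1)) := hstep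
          _ = tS ↥R Q (tS ↥R Q (idealToSub ↥R Q I) ^ (n + 1 + 1)) := (tS_pow _ _).symm
          _ = tS ↥R Q (idealToSub ↥R Q I) ^ (n + 1 + 1) := hclosed _ (hpow (n + 1))
    · rintro ⟨n, hn⟩
      refine ⟨n, ?_⟩
      simp only [tI] at hn ⊢
      rw [idealToSub_mul, idealToSub_pow, idealToSub_pow, ← tS_mul_pow, hn, tS_pow]
  · push_neg at hu
    have hts := tS_eq_of_Vs_le_one (R := R) (Q := Q) hu
    constructor
    · rintro ⟨n, hn⟩
      refine ⟨n, ?_⟩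
      simp only [tI, hts] at hn ⊢
      rw [idealToSub_mul, idealToSub_pow, idealToSub_pow] at hn
      exact hn
    · rintro ⟨n, hn⟩
      refine ⟨n, ?_⟩
      simp only [tI, hts] at hn ⊢
      rw [idealToSub_mul, idealToSub_pow, idealToSub_pow]
      exact hn
end

section
/- Let k ⊆ K be fields and W a k-vector subspace of K with k ⊆ W. If W^n = W^(n+1) for some positive integer n and K is algebraic over k, then W^n is a field. -/
/-- Let `k ⊆ K` be fields with `K` algebraic over `k`, and `W` a `k`-subspace of `K`
containing `k`. If `W^n = W^(n+1)` for some positive `n`, then `W^n` is a field. -/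
theorem pow_isField_of_pow_eq_pow_succ (k K : Type*) [Field k] [Field K] [Algebra k K]
    [Algebra.IsAlgebraic k K] (W : Submodule k K) (h1 : (1 : K) ∈ W)
    (n : ℕ) (hn : 0 < n) (h : W ^ n = W ^ (n + 1)) :
    ∃ F : Subfield K, (↑(W ^ n) : Set K) = (↑F : Set K) := by
  have key : ∀ m : ℕ, W ^ (n + m) = W ^ n := by
    intro m
    induction m with
    | zero => rfl
    | succ m ih =>
      have e : W ^ (n + (m + 1)) = W ^ (n + m) * W := by rw [← Nat.add_assoc, pow_succ]
      rw [e, ih, ← pow_succ, ← h]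
  have h1n : (1 : K) ∈ W ^ n := by
    have := Submodule.pow_mem_pow (M := W) h1 n
    simpa using this
  have hmul : ∀ x y : K, x ∈ W ^ n → y ∈ W ^ n → x * y ∈ W ^ n := by
    intro x y hx hy
    have : x * y ∈ W ^ n * W ^ n := Submodule.mul_mem_mul hx hy
    rwa [← pow_add, key n] at this
  let S : Subalgebra k K := (W ^ n).toSubalgebra h1n hmul
  have hF : IsField S := Subalgebra.isField_of_algebraic S
  refine ⟨(S.toIntermediateField' hF).toSubfield, rfl⟩
end
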